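/- If λ₁ ≥ ⋯ ≥ λₙ satisfy ∑ᵢ arctan λᵢ ≥ (n−2)π/2 + δ with δ > 0 and h < nπ/2, and H is a symmetric matrix with these eigenvalues, then the eigenvalues λ'₁, …, λ'_{n−1} of any principal (n−1)×(n−1) submatrix satisfy ∑_{α=1}^{n−1} arctan λ'_α ≥ (n−3)π/2 + δ. -/

import Mathlib

open Real Finset Module Matrix

section Interlacing

variable {n : ℕ} {A : Matrix (Fin n) (Fin n) ℝ} (hA : A.IsHermitian)

/-- coordinates of `x` in the eigenbasis of `A` -/
noncomputable def coordsOf (hA : A.IsHermitian) (x : Fin n → ℝ) : Fin n → ℝ :=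
  (star (hA.eigenvectorUnitary : Matrix (Fin n) (Fin n) ℝ)) *ᵥ x

lemma star_eq_transpose_real (U : Matrix (Fin n) (Fin n) ℝ) : star U = Uᵀ := rfl

lemma coordsOf_eq (x : Fin n → ℝ) :
    coordsOf hA x = x ᵥ* (hA.eigenvectorUnitary : Matrix (Fin n) (Fin n) ℝ) := by
  rw [coordsOf, star_eq_transpose_real, Matrix.mulVec_transpose]

lemma dot_eq_sum_coords (x : Fin n → ℝ) :
    x ⬝ᵥ x = ∑ i, (coordsOf hA x i) ^ 2 := by
  set U := (hA.eigenvectorUnitary : Matrix (Fin n) (Fin n) ℝ) with hUdef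
  have hUU : U * star U = 1 := Matrix.mem_unitaryGroup_iff.mp hA.eigenvectorUnitary.2
  have h1 : ∑ i, (coordsOf hA x i) ^ 2 = coordsOf hA x ⬝ᵥ coordsOf hA x :=
    Finset.sum_congr rfl (fun i _ => pow_two _)
  rw [h1, coordsOf_eq, ← Matrix.dotProduct_mulVec, ← Matrix.mulVec_transpose,
    Matrix.mulVec_mulVec, ← star_eq_transpose_real, hUU, Matrix.one_mulVec]

lemma quad_eq_sum_coords (x : Fin n → ℝ) :
    x ⬝ᵥ A *ᵥ x = ∑ i, hA.eigenvalues i * (coordsOf hA x i) ^ 2 := by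
  set U := (hA.eigenvectorUnitary : Matrix (Fin n) (Fin n) ℝ) with hUdef
  conv_lhs => rw [hA.spectral_theorem, Unitary.conjStarAlgAut_apply]
  rw [← Matrix.mulVec_mulVec, ← Matrix.mulVec_mulVec, Matrix.dotProduct_mulVec, ← coordsOf_eq]
  have : (Matrix.diagonal (RCLike.ofReal ∘ hA.eigenvalues) : Matrix (Fin n) (Fin n) ℝ)
      = Matrix.diagonal hA.eigenvalues := by
    congr 1
  rw [this]
  simp only [dotProduct, Matrix.mulVec_diagonal]
  apply Finset.sum_congr rfl
  intro i _
  show coordsOf hA x i * (hA.eigenvalues i * coordsOf hA x i) = _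
  ring

lemma coordsOf_ne_zero {x : Fin n → ℝ} (hx : x ≠ 0) : coordsOf hA x ≠ 0 := by
  set U := (hA.eigenvectorUnitary : Matrix (Fin n) (Fin n) ℝ) with hUdef
  have hUU : U * star U = 1 := Matrix.mem_unitaryGroup_iff.mp hA.eigenvectorUnitary.2
  intro h
  apply hx
  have : U *ᵥ (coordsOf hA x) = x := by
    rw [coordsOf, Matrix.mulVec_mulVec, hUU, Matrix.one_mulVec]
  rw [← this, h, Matrix.mulVec_zero]

/-- the span of the eigenvectors indexed by `s` -/
noncomputable def eigSpan (hA : A.IsHermitian) (s : Finset (Fin n)) :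
    Submodule ℝ (Fin n → ℝ) :=
  Submodule.span ℝ ((fun i => (WithLp.equiv 2 (Fin n → ℝ)) (hA.eigenvectorBasis i)) '' ↑s)

lemma coordsOf_eigSpan {s : Finset (Fin n)} {x : Fin n → ℝ} (hx : x ∈ eigSpan hA s)
    {i : Fin n} (hi : i ∉ s) : coordsOf hA x i = 0 := by
  set U := (hA.eigenvectorUnitary : Matrix (Fin n) (Fin n) ℝ) with hUdef
  have key : eigSpan hA s ≤ LinearMap.ker ((LinearMap.proj i : (Fin n → ℝ) →ₗ[ℝ] ℝ).comp
      ((star U).mulVecLin)) := by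
    rw [eigSpan, Submodule.span_le]
    rintro _ ⟨j, hj, rfl⟩
    simp only [SetLike.mem_coe, LinearMap.mem_ker, LinearMap.comp_apply, Matrix.mulVecLin_apply,
      LinearMap.proj_apply]
    rw [WithLp.equiv_apply, hA.star_eigenvectorUnitary_mulVec j]
    refine Pi.single_eq_of_ne ?_ 1
    intro hij
    exact hi (by rw [hij]; simpa using hj)
  have := key hx
  simpa only [coordsOf, LinearMap.mem_ker, LinearMap.comp_apply, Matrix.mulVecLin_apply,
    LinearMap.proj_apply] using this

lemma card_le_finrank_eigSpan (s : Finset (Fin n)) : s.card ≤ finrank ℝ (eigSpan hA s) := by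
  classical
  set U := (hA.eigenvectorUnitary : Matrix (Fin n) (Fin n) ℝ) with hUdef
  set L : (Fin n → ℝ) →ₗ[ℝ] (Fin n → ℝ) := (star U).mulVecLin with hLdef
  have hmap : Submodule.map L (eigSpan hA s)
      = Submodule.span ℝ ((fun j => (Pi.single j 1 : Fin n → ℝ)) '' ↑s) := by
    rw [eigSpan, Submodule.map_span, ← Set.image_comp]
    congr 1
    apply Set.image_congr
    intro j _
    simp only [Function.comp_apply, hLdef, Matrix.mulVecLin_apply]
    exact hA.star_eigenvectorUnitary_mulVec j
  have hli : LinearIndependent ℝ (fun j : {i : Fin n // i ∈ s} => (Pi.single (j : Fin n) 1 : Fin n → ℝ)) := by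
    have h2 := ((Pi.basisFun ℝ (Fin n)).linearIndependent).comp
      (Subtype.val : {i : Fin n // i ∈ s} → Fin n) Subtype.val_injective
    simpa [Function.comp_def, Pi.basisFun_apply] using h2
  have hrange : Set.range (fun j : {i : Fin n // i ∈ s} => (Pi.single (j : Fin n) 1 : Fin n → ℝ))
      = (fun j => (Pi.single j 1 : Fin n → ℝ)) '' ↑s := by
    ext y
    constructor
    · rintro ⟨j, rfl⟩; exact ⟨j, Finset.mem_coe.mpr j.2, rfl⟩
    · rintro ⟨j, hj, rfl⟩; exact ⟨⟨j, Finset.mem_coe.mp hj⟩, rfl⟩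
  have hfr : finrank ℝ (Submodule.span ℝ ((fun j => (Pi.single j 1 : Fin n → ℝ)) '' ↑s)) = s.card := by
    rw [← hrange, finrank_span_eq_card hli]
    simp
  calc s.card = finrank ℝ (Submodule.map L (eigSpan hA s)) := by rw [hmap, hfr]
    _ ≤ finrank ℝ (eigSpan hA s) := Submodule.finrank_map_le L (eigSpan hA s)

/-- Counting lemma: if the quadratic form of `A` is `≥ c` on a subspace `W`, then `A` has at
least `finrank W` eigenvalues `≥ c`. -/
lemma finrank_le_card_eigenvalues_ge (c : ℝ) (W : Submodule ℝ (Fin n → ℝ))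
    (hW : ∀ x ∈ W, c * (x ⬝ᵥ x) ≤ x ⬝ᵥ A *ᵥ x) :
    finrank ℝ W ≤ (univ.filter (fun i => c ≤ hA.eigenvalues i)).card := by
  classical
  by_contra hlt
  push_neg at hlt
  set s : Finset (Fin n) := univ.filter (fun i => hA.eigenvalues i < c) with hsdef
  set V : Submodule ℝ (Fin n → ℝ) := eigSpan hA s with hVdef
  have hcards : (univ.filter (fun i => c ≤ hA.eigenvalues i)).card + s.card = n := by
    have := Finset.card_filter_add_card_filter_not
      (s := (univ : Finset (Fin n))) (p := fun i => c ≤ hA.eigenvalues i)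
    simp only [Finset.card_univ, Fintype.card_fin, not_le] at this
    convert this using 2
  have hVrank : s.card ≤ finrank ℝ V := card_le_finrank_eigSpan hA s
  -- dimension counting
  have hsum : finrank ℝ ↥(W ⊔ V) + finrank ℝ (W ⊓ V : Submodule ℝ (Fin n → ℝ))
      = finrank ℝ W + finrank ℝ V := Submodule.finrank_sup_add_finrank_inf_eq W V
  have hle : finrank ℝ ↥(W ⊔ V) ≤ n := by
    have := Submodule.finrank_le (W ⊔ V)
    simpa [Module.finrank_fintype_fun_eq_card] using this
  have hpos : 0 < finrank ℝ (W ⊓ V : Submodule ℝ (Fin n → ℝ)) := by omega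
  obtain ⟨⟨x, hxWV⟩, hx0⟩ := Module.finrank_pos_iff_exists_ne_zero.mp hpos
  have hxne : x ≠ 0 := fun h => hx0 (by simp [h])
  have hxW : x ∈ W := hxWV.1
  have hxV : x ∈ V := hxWV.2
  -- strict inequality on V
  have hstrict : x ⬝ᵥ A *ᵥ x < c * (x ⬝ᵥ x) := by
    rw [quad_eq_sum_coords hA, dot_eq_sum_coords hA, Finset.mul_sum]
    obtain ⟨i₀, hi₀⟩ := Function.ne_iff.mp (coordsOf_ne_zero hA hxne)
    have hi₀s : i₀ ∈ s := by
      by_contra h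
      exact hi₀ (coordsOf_eigSpan hA hxV h)
    have hi₀' : coordsOf hA x i₀ ≠ 0 := hi₀
    have hle1 : ∀ i ∈ (univ : Finset (Fin n)),
        hA.eigenvalues i * (coordsOf hA x i) ^ 2 ≤ c * (coordsOf hA x i) ^ 2 := by
      intro i _
      by_cases hi : i ∈ s
      · have : hA.eigenvalues i < c := by
          simpa [hsdef] using hi
        exact mul_le_mul_of_nonneg_right this.le (sq_nonneg _)
      · rw [coordsOf_eigSpan hA hxV hi]
        simp
    have hex : ∃ i ∈ (univ : Finset (Fin n)),
        hA.eigenvalues i * (coordsOf hA x i) ^ 2 < c * (coordsOf hA x i) ^ 2 := by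
      refine ⟨i₀, Finset.mem_univ i₀, ?_⟩
      have hlam0 : hA.eigenvalues i₀ < c := by simpa [hsdef] using hi₀s
      have hsq : 0 < (coordsOf hA x i₀) ^ 2 :=
        lt_of_le_of_ne (sq_nonneg _) (Ne.symm (pow_ne_zero 2 hi₀'))
      exact mul_lt_mul_of_pos_right hlam0 hsq
    exact Finset.sum_lt_sum hle1 hex
  exact absurd (hW x hxW) (not_le.mpr hstrict)

end Interlacing

section Submatrix

variable {m : ℕ}

/-- extension by zero as a linear map -/
noncomputable def padZero (m : ℕ) : (Fin m → ℝ) →ₗ[ℝ] (Fin (m+1) → ℝ) where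
  toFun x := Fin.snoc x 0
  map_add' x y := by
    funext i
    refine Fin.lastCases ?_ ?_ i <;> simp
  map_smul' c x := by
    funext i
    refine Fin.lastCases ?_ ?_ i <;> simp

lemma padZero_inj : Function.Injective (padZero m) := by
  intro x y h
  funext i
  have := congrFun h (Fin.castSucc i)
  simpa [padZero] using this

lemma padZero_dot (x : Fin m → ℝ) (w : Fin (m+1) → ℝ) :
    (padZero m x) ⬝ᵥ w = x ⬝ᵥ (w ∘ Fin.castSucc) := by
  simp only [dotProduct, padZero, LinearMap.coe_mk, AddHom.coe_mk]
  rw [Fin.sum_univ_castSucc]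
  simp

lemma padZero_dot_self (x : Fin m → ℝ) : (padZero m x) ⬝ᵥ (padZero m x) = x ⬝ᵥ x := by
  rw [padZero_dot]
  simp only [dotProduct]
  apply Finset.sum_congr rfl
  intro i _
  simp [padZero]

lemma padZero_quad (H : Matrix (Fin (m+1)) (Fin (m+1)) ℝ) (x : Fin m → ℝ) :
    (padZero m x) ⬝ᵥ H *ᵥ (padZero m x)
      = x ⬝ᵥ (H.submatrix Fin.castSucc Fin.castSucc) *ᵥ x := by
  rw [padZero_dot]
  apply Finset.sum_congr rfl
  intro i _
  simp only [Function.comp_apply, Matrix.mulVec, dotProduct, Matrix.submatrix_apply]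
  rw [Fin.sum_univ_castSucc]
  simp [padZero]

/-- Interlacing, counting form: the number of eigenvalues `≥ c` drops by at most one when
passing to the principal submatrix. -/
lemma card_eigenvalues_ge_sub_le (H : Matrix (Fin (m+1)) (Fin (m+1)) ℝ) (hH : H.IsHermitian)
    (hsub : (H.submatrix Fin.castSucc Fin.castSucc).IsHermitian) (c : ℝ) :
    (univ.filter (fun i => c ≤ hH.eigenvalues i)).card
      ≤ (univ.filter (fun α => c ≤ hsub.eigenvalues α)).card + 1 := by
  classical
  set s : Finset (Fin (m+1)) := univ.filter (fun i => c ≤ hH.eigenvalues i) with hsdef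
  set W : Submodule ℝ (Fin (m+1) → ℝ) := eigSpan hH s with hWdef
  have hWrank : s.card ≤ finrank ℝ W := card_le_finrank_eigSpan hH s
  have hWquad : ∀ x ∈ W, c * (x ⬝ᵥ x) ≤ x ⬝ᵥ H *ᵥ x := by
    intro x hx
    rw [quad_eq_sum_coords hH, dot_eq_sum_coords hH, Finset.mul_sum]
    apply Finset.sum_le_sum
    intro i _
    by_cases hi : i ∈ s
    · have : c ≤ hH.eigenvalues i := by simpa [hsdef] using hi
      exact mul_le_mul_of_nonneg_right this (sq_nonneg _)
    · rw [coordsOf_eigSpan hH hx hi]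
      simp
  set W' : Submodule ℝ (Fin m → ℝ) := Submodule.comap (padZero m) W with hW'def
  -- finrank W' ≥ finrank W - 1
  have hmapW' : Submodule.map (padZero m) W' = W ⊓ LinearMap.range (padZero m) := by
    rw [hW'def, Submodule.map_comap_eq]
    exact inf_comm _ _
  have hfrW' : finrank ℝ W' = finrank ℝ (W ⊓ LinearMap.range (padZero m) : Submodule ℝ _) := by
    rw [← hmapW']
    exact (LinearEquiv.finrank_eq (Submodule.equivMapOfInjective _ padZero_inj W'))
  have hrange : finrank ℝ (LinearMap.range (padZero m)) = m := by
    rw [LinearMap.finrank_range_of_inj padZero_inj]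
    simp [Module.finrank_fintype_fun_eq_card]
  have hsup : finrank ℝ ↥(W ⊔ LinearMap.range (padZero m)) ≤ m + 1 := by
    have := Submodule.finrank_le (W ⊔ LinearMap.range (padZero m))
    simpa [Module.finrank_fintype_fun_eq_card] using this
  have hdim : finrank ℝ ↥(W ⊔ LinearMap.range (padZero m))
      + finrank ℝ (W ⊓ LinearMap.range (padZero m) : Submodule ℝ _)
      = finrank ℝ W + finrank ℝ (LinearMap.range (padZero m)) :=
    Submodule.finrank_sup_add_finrank_inf_eq _ _
  have hW'rank : finrank ℝ W ≤ finrank ℝ W' + 1 := by omega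
  -- quadratic bound on W'
  have hW'quad : ∀ x ∈ W', c * (x ⬝ᵥ x)
      ≤ x ⬝ᵥ (H.submatrix Fin.castSucc Fin.castSucc) *ᵥ x := by
    intro x hx
    have hmem : padZero m x ∈ W := hx
    have := hWquad _ hmem
    rwa [padZero_dot_self, padZero_quad] at this
  have := finrank_le_card_eigenvalues_ge hsub c W' hW'quad
  omega

end Submatrix

lemma card_filter_comp_perm {k : ℕ} (f : Fin k → ℝ) (σ : Equiv.Perm (Fin k)) (c : ℝ) :
    (univ.filter (fun i => c ≤ f i)).card = (univ.filter (fun i => c ≤ f (σ i))).card := by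
  classical
  rw [Finset.card_filter, Finset.card_filter]
  exact (Equiv.sum_comp σ (fun i => if c ≤ f i then 1 else 0)).symm

theorem stmt15 (m : ℕ) (hm : 1 ≤ m) (H : Matrix (Fin (m + 1)) (Fin (m + 1)) ℝ)
    (hH : H.IsHermitian)
    (hsub : (H.submatrix Fin.castSucc Fin.castSucc).IsHermitian)
    (δ : ℝ) (hδ : 0 < δ)
    (hsum : ((m : ℝ) + 1 - 2) * (π / 2) + δ ≤ ∑ i, Real.arctan (hH.eigenvalues i)) :
    ((m : ℝ) + 1 - 3) * (π / 2) + δ ≤ ∑ α, Real.arctan (hsub.eigenvalues α) := by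
  classical
  set lam : Fin (m+1) → ℝ := hH.eigenvalues with hlam
  set mu : Fin m → ℝ := hsub.eigenvalues with hmu
  set σ := Tuple.sort lam with hσ
  set τ := Tuple.sort mu with hτ
  have hσmono : Monotone (lam ∘ σ) := Tuple.monotone_sort lam
  have hτmono : Monotone (mu ∘ τ) := Tuple.monotone_sort mu
  -- counting lower bound for lam
  have hcount1 : ∀ j : Fin (m+1),
      (m + 1) - (j : ℕ) ≤ (univ.filter (fun i => lam (σ j) ≤ lam i)).card := by
    intro j
    rw [card_filter_comp_perm lam σ]
    calc (m+1) - (j:ℕ) = (Finset.Ici j).card := (Fin.card_Ici j).symm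
      _ ≤ _ := by
          apply Finset.card_le_card
          intro i hi
          simp only [Finset.mem_Ici] at hi
          simp only [Finset.mem_filter, Finset.mem_univ, true_and]
          exact hσmono hi
  -- counting for mu via interlacing
  have hcount2 : ∀ j : Fin (m+1),
      m - (j : ℕ) ≤ (univ.filter (fun α => lam (σ j) ≤ mu α)).card := by
    intro j
    have h1 := hcount1 j
    have h2 := card_eigenvalues_ge_sub_le H hH hsub (lam (σ j))
    rw [← hlam, ← hmu] at h2
    omega
  -- sorted interlacing
  have hsorted : ∀ j : Fin m, lam (σ (Fin.castSucc j)) ≤ mu (τ j) := by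
    intro j
    by_contra hcon
    push_neg at hcon
    have hcard := hcount2 (Fin.castSucc j)
    rw [card_filter_comp_perm mu τ] at hcard
    have hsub2 : (univ.filter (fun α => lam (σ (Fin.castSucc j)) ≤ mu (τ α))) ⊆ Finset.Ioi j := by
      intro α hα
      simp only [Finset.mem_filter, Finset.mem_univ, true_and] at hα
      simp only [Finset.mem_Ioi]
      by_contra hle
      push_neg at hle
      exact absurd (le_trans hα (hτmono hle)) (not_le.mpr hcon)
    have hcard2 := Finset.card_le_card hsub2
    rw [Fin.card_Ioi] at hcard2
    have hj : (j : ℕ) < m := j.isLt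
    simp only [Fin.coe_castSucc] at hcard
    omega
  -- conclude
  have hsum_mu : ∑ α, Real.arctan (mu α) = ∑ α, Real.arctan (mu (τ α)) :=
    (Equiv.sum_comp τ (fun α => Real.arctan (mu α))).symm
  have hsum_lam : ∑ i, Real.arctan (lam i) = ∑ i, Real.arctan (lam (σ i)) :=
    (Equiv.sum_comp σ (fun i => Real.arctan (lam i))).symm
  have hstep : ∑ α : Fin m, Real.arctan (lam (σ (Fin.castSucc α)))
      ≤ ∑ α, Real.arctan (mu (τ α)) := by
    apply Finset.sum_le_sum
    intro α _
    exact Real.arctan_strictMono.monotone (hsorted α)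
  have hsplit : ∑ i : Fin (m+1), Real.arctan (lam (σ i))
      = ∑ α : Fin m, Real.arctan (lam (σ (Fin.castSucc α)))
        + Real.arctan (lam (σ (Fin.last m))) :=
    Fin.sum_univ_castSucc (fun i => Real.arctan (lam (σ i)))
  have hlast : Real.arctan (lam (σ (Fin.last m))) < π / 2 := Real.arctan_lt_pi_div_two _
  rw [hsum_mu]
  have : ((m : ℝ) + 1 - 2) * (π / 2) + δ ≤ ∑ i, Real.arctan (lam (σ i)) := by
    rw [← hsum_lam]; exact hsum
  rw [hsplit] at this
  push_cast
  linarith
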